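/- arXiv:2403.07337 — 3 statements merged into one kernel-verified Lean document; each statement's English description precedes it below -/
import Mathlib

section
/- Let A, B, C be mutually independent ℕ-valued random variables on a probability space (Ω, ℙ) having Poisson distributions with means a > 0, b > 0, c > 0 respectively. Then ℙ[C + B = 0 and C + A ≥ 1] / ℙ[C + A ≥ 1] = e^{−(b+c)}(1 − e^{−a}) / (1 − e^{−(a+c)}). -/
open MeasureTheory ProbabilityTheory Real

/-- For mutually independent Poisson random variables `A`, `B`, `C` with means
`a`, `b`, `c`, `ℙ[C + B = 0 ∧ C + A ≥ 1] / ℙ[C + A ≥ 1]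
  = e^{-(b+c)}(1 - e^{-a}) / (1 - e^{-(a+c)})`. -/
theorem poisson_nlos_to_los_transition
    {Ω : Type*} [MeasurableSpace Ω] (μ : Measure Ω) [IsProbabilityMeasure μ]
    (A B C : Ω → ℕ) (hAm : Measurable A) (hBm : Measurable B) (hCm : Measurable C)
    (a b c : ℝ) (ha : 0 < a) (hb : 0 < b) (hc : 0 < c)
    (hA : ∀ n : ℕ, μ {ω | A ω = n} =
      ENNReal.ofReal (Real.exp (-a) * a ^ n / n.factorial))
    (hB : ∀ n : ℕ, μ {ω | B ω = n} =
      ENNReal.ofReal (Real.exp (-b) * b ^ n / n.factorial))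
    (hC : ∀ n : ℕ, μ {ω | C ω = n} =
      ENNReal.ofReal (Real.exp (-c) * c ^ n / n.factorial))
    (hindep : iIndepFun ![A, B, C] μ) :
    μ {ω | C ω + B ω = 0 ∧ 1 ≤ C ω + A ω} / μ {ω | 1 ≤ C ω + A ω} =
      ENNReal.ofReal (Real.exp (-(b + c)) * (1 - Real.exp (-a)) / (1 - Real.exp (-(a + c)))) := by
  -- single-point probabilities at 0
  have hA0 : μ (A ⁻¹' {0}) = ENNReal.ofReal (Real.exp (-a)) := by
    have := hA 0; simp at this; exact this
  have hB0 : μ (B ⁻¹' {0}) = ENNReal.ofReal (Real.exp (-b)) := by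
    have := hB 0; simp at this; exact this
  have hC0 : μ (C ⁻¹' {0}) = ENNReal.ofReal (Real.exp (-c)) := by
    have := hC 0; simp at this; exact this
  -- pairwise independence
  have hAC : IndepFun A C μ := by
    have := hindep.indepFun (i := 0) (j := 2) (by decide)
    simpa using this
  have hBC : IndepFun B C μ := by
    have := hindep.indepFun (i := 1) (j := 2) (by decide)
    simpa using this
  have hAC0 : μ (A ⁻¹' {0} ∩ C ⁻¹' {0}) = ENNReal.ofReal (Real.exp (-a) * Real.exp (-c)) := by
    rw [hAC.measure_inter_preimage_eq_mul _ _ (measurableSet_singleton 0) (measurableSet_singleton 0),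
      hA0, hC0, ← ENNReal.ofReal_mul (Real.exp_nonneg _)]
  have hBC0 : μ (B ⁻¹' {0} ∩ C ⁻¹' {0}) = ENNReal.ofReal (Real.exp (-b) * Real.exp (-c)) := by
    rw [hBC.measure_inter_preimage_eq_mul _ _ (measurableSet_singleton 0) (measurableSet_singleton 0),
      hB0, hC0, ← ENNReal.ofReal_mul (Real.exp_nonneg _)]
  -- triple
  have hABC0 : μ (A ⁻¹' {0} ∩ (B ⁻¹' {0} ∩ C ⁻¹' {0}))
      = ENNReal.ofReal (Real.exp (-a) * (Real.exp (-b) * Real.exp (-c))) := by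
    have h := hindep.meas_iInter (s := fun i => (![A, B, C] i) ⁻¹' {0})
      (fun i => ⟨{0}, measurableSet_singleton 0, rfl⟩)
    have hset : (⋂ i, (![A, B, C] i) ⁻¹' {0}) = A ⁻¹' {0} ∩ (B ⁻¹' {0} ∩ C ⁻¹' {0}) := by
      ext ω
      simp [Fin.forall_fin_succ, and_assoc]
    rw [hset, Fin.prod_univ_three] at h
    simp only [Matrix.cons_val_zero, Matrix.cons_val_one, Matrix.head_cons,
      Matrix.cons_val_two, Matrix.tail_cons] at h
    rw [h, hA0, hB0, hC0, ← ENNReal.ofReal_mul (Real.exp_nonneg _),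
      ← ENNReal.ofReal_mul (by positivity), mul_assoc]
  -- denominator
  have hden : μ {ω | 1 ≤ C ω + A ω} = ENNReal.ofReal (1 - Real.exp (-a) * Real.exp (-c)) := by
    have hsetc : {ω | 1 ≤ C ω + A ω} = (A ⁻¹' {0} ∩ C ⁻¹' {0})ᶜ := by
      ext ω; simp [Nat.one_le_iff_ne_zero, Nat.add_eq_zero, and_comm]
    rw [hsetc, measure_compl ((hAm (measurableSet_singleton 0)).inter (hCm (measurableSet_singleton 0)))
      (measure_ne_top _ _), hAC0, measure_univ,
      ← ENNReal.ofReal_one, ← ENNReal.ofReal_sub _ (by positivity)]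
  -- numerator
  have hnum : μ {ω | C ω + B ω = 0 ∧ 1 ≤ C ω + A ω}
      = ENNReal.ofReal (Real.exp (-b) * Real.exp (-c) * (1 - Real.exp (-a))) := by
    have hset : {ω | C ω + B ω = 0 ∧ 1 ≤ C ω + A ω}
        = (B ⁻¹' {0} ∩ C ⁻¹' {0}) \ (A ⁻¹' {0} ∩ (B ⁻¹' {0} ∩ C ⁻¹' {0})) := by
      ext ω
      simp only [Set.mem_setOf_eq, Nat.add_eq_zero, Nat.one_le_iff_ne_zero, Set.mem_diff,
        Set.mem_inter_iff, Set.mem_preimage, Set.mem_singleton_iff]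
      constructor
      · rintro ⟨⟨hc0, hb0⟩, hca⟩
        exact ⟨⟨hb0, hc0⟩, fun h => hca (by simp [hc0, h.1])⟩
      · rintro ⟨⟨hb0, hc0⟩, hna⟩
        refine ⟨⟨hc0, hb0⟩, fun h => hna ⟨(Nat.add_eq_zero.mp h).2, hb0, hc0⟩⟩
    have hsub : (A ⁻¹' {0} ∩ (B ⁻¹' {0} ∩ C ⁻¹' {0})) ⊆ (B ⁻¹' {0} ∩ C ⁻¹' {0}) :=
      Set.inter_subset_right
    rw [hset, measure_diff hsub
      (((hAm (measurableSet_singleton 0)).inter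
        ((hBm (measurableSet_singleton 0)).inter (hCm (measurableSet_singleton 0)))).nullMeasurableSet)
      (measure_ne_top _ _), hBC0, hABC0,
      ← ENNReal.ofReal_sub _ (by positivity)]
    ring_nf
  rw [hnum, hden]
  have hdpos : 0 < 1 - Real.exp (-a) * Real.exp (-c) := by
    rw [← Real.exp_add]
    have : Real.exp (-a + -c) < 1 := Real.exp_lt_one_iff.mpr (by linarith)
    linarith
  rw [← ENNReal.ofReal_div_of_pos hdpos]
  congr 1
  rw [neg_add, Real.exp_add, neg_add, Real.exp_add]
end

section
/- Let m > 0, N ≥ 1, and let h₁,…,h_N, h'₁,…,h'_N be 2N mutually independent random variables on a probability space, each distributed according to the Gamma distribution with shape m and rate m. Then the reflecting gain G_bf := 𝔼[(∑_{n=1}^{N} √(h_n)·√(h'_n))²] equals N + N(N−1)·Γ(m + 1/2)⁴/(m²·Γ(m)⁴). -/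
open MeasureTheory ProbabilityTheory Real

open Set in
lemma gamma_sqrt_pow_moment (m : ℝ) (hm : 0 < m) (k : ℕ) :
    Integrable (fun x => Real.sqrt x ^ k) (gammaMeasure m m) ∧
      ∫ x, Real.sqrt x ^ k ∂(gammaMeasure m m)
        = Real.Gamma (m + (k : ℝ) / 2) / (m ^ ((k : ℝ) / 2) * Real.Gamma m) := by
  set p : ℝ := (k : ℝ) / 2 with hp_def
  have hp : 0 ≤ p := by positivity
  set F : ℝ → ℝ := fun x => gammaPDFReal m m x * Real.sqrt x ^ k with hF
  have hzero : ∀ x ∉ Ici (0:ℝ), F x = 0 := by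
    intro x hx
    simp only [mem_Ici, not_le] at hx
    simp [hF, gammaPDFReal, hx.not_ge]
  have hIoi : ∀ x ∈ Ioi (0:ℝ), F x
      = (m ^ m / Real.Gamma m) * (x ^ (m + p - 1) * Real.exp (-(m * x))) := by
    intro x hx
    rw [mem_Ioi] at hx
    have h1 : Real.sqrt x ^ k = x ^ p := by
      rw [Real.sqrt_eq_rpow, ← Real.rpow_natCast (x ^ ((1:ℝ)/2)) k, ← Real.rpow_mul hx.le]
      congr 1
      rw [hp_def]; ring
    have h2 : x ^ (m - 1) * x ^ p = x ^ (m + p - 1) := by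
      rw [← Real.rpow_add hx]; ring_nf
    simp only [hF, gammaPDFReal, if_pos hx.le]
    calc m ^ m / Real.Gamma m * x ^ (m-1) * Real.exp (-(m*x)) * Real.sqrt x ^ k
        = m ^ m / Real.Gamma m * ((x ^ (m-1) * x ^ p) * Real.exp (-(m*x))) := by rw [h1]; ring
      _ = _ := by rw [h2]
  have hsupport : Function.support F ⊆ Ici 0 := fun x hx => by
    by_contra hc; exact hx (hzero x hc)
  have hint_Ioi : IntegrableOn (fun x => x ^ (m + p - 1) * Real.exp (-(m * x))) (Ioi 0) := by
    have := integrableOn_rpow_mul_exp_neg_mul_rpow (s := m + p - 1) (p := 1)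
      (by linarith) zero_lt_one hm
    simpa [Real.rpow_one, neg_mul] using this
  have hFint : Integrable F := by
    rw [← integrableOn_iff_integrable_of_support_subset hsupport,
      integrableOn_Ici_iff_integrableOn_Ioi]
    exact MeasureTheory.IntegrableOn.congr_fun (hint_Ioi.const_mul _) (fun x hx => (hIoi x hx).symm) measurableSet_Ioi
  have hFval : ∫ x, F x
      = (m ^ m / Real.Gamma m) * ((1 / m) ^ (m + p) * Real.Gamma (m + p)) := by
    rw [← setIntegral_eq_integral_of_forall_compl_eq_zero hzero,
      integral_Ici_eq_integral_Ioi, setIntegral_congr_fun measurableSet_Ioi hIoi,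
      integral_const_mul, integral_rpow_mul_exp_neg_mul_Ioi (by linarith : (0:ℝ) < m + p) hm]
  have hmeas_pdf : Measurable fun x => (gammaPDFReal m m x).toNNReal :=
    measurable_real_toNNReal.comp (measurable_gammaPDFReal m m)
  have hdens : gammaMeasure m m
      = volume.withDensity (fun x => ((gammaPDFReal m m x).toNNReal : ENNReal)) := rfl
  have hsmul : (fun x => (gammaPDFReal m m x).toNNReal • (Real.sqrt x ^ k)) = F := by
    funext x
    rw [NNReal.smul_def, Real.coe_toNNReal _ (gammaPDFReal_nonneg hm hm x), smul_eq_mul]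
  constructor
  · rw [hdens, integrable_withDensity_iff_integrable_smul hmeas_pdf, hsmul]
    exact hFint
  · rw [hdens, integral_withDensity_eq_integral_smul hmeas_pdf, hsmul, hFval]
    have hmm : (0:ℝ) < m ^ m := Real.rpow_pos_of_pos hm m
    have hmp : (0:ℝ) < m ^ p := Real.rpow_pos_of_pos hm p
    have hg : Real.Gamma m ≠ 0 := (Real.Gamma_pos_of_pos hm).ne'
    rw [one_div, Real.inv_rpow hm.le, Real.rpow_add hm]
    field_simp

/-- The IRS reflecting gain under Nakagami-m fading: if `h₁,…,h_N, h'₁,…,h'_N` are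
mutually independent Gamma(m, m) random variables, then
`𝔼[(∑ n, √(h n)·√(h' n))²] = N + N(N−1)·Γ(m + 1/2)⁴ / (m²·Γ(m)⁴)`. -/
theorem reflecting_gain_nakagami
    {Ω : Type*} [MeasurableSpace Ω] (μ : Measure Ω) [IsProbabilityMeasure μ]
    (m : ℝ) (hm : 0 < m) (N : ℕ) (hN : 1 ≤ N)
    (h h' : Fin N → Ω → ℝ)
    (hmeas : ∀ n, Measurable (h n)) (hmeas' : ∀ n, Measurable (h' n))
    (hdist : ∀ n, Measure.map (h n) μ = gammaMeasure m m)
    (hdist' : ∀ n, Measure.map (h' n) μ = gammaMeasure m m)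
    (hindep : iIndepFun (Sum.elim h h') μ) :
    (∫ ω, (∑ n, Real.sqrt (h n ω) * Real.sqrt (h' n ω)) ^ 2 ∂μ) =
      N + N * (N - 1) * Real.Gamma (m + 1 / 2) ^ 4 / (m ^ 2 * Real.Gamma m ^ 4) := by
  set c : ℝ := Real.Gamma (m + 1 / 2) / (m ^ ((1:ℝ) / 2) * Real.Gamma m) with hc
  set Y : (Fin N ⊕ Fin N) → Ω → ℝ := fun i ω => Real.sqrt (Sum.elim h h' i ω) with hYdef
  have hmeasS : ∀ i, Measurable (Sum.elim h h' i) := by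
    rintro (n | n)
    exacts [hmeas n, hmeas' n]
  have hmap : ∀ i, Measure.map (Sum.elim h h' i) μ = gammaMeasure m m := by
    rintro (n | n)
    exacts [hdist n, hdist' n]
  have hYmeas : ∀ i, Measurable (Y i) := fun i =>
    Real.continuous_sqrt.measurable.comp (hmeasS i)
  have hYindep : iIndepFun Y μ :=
    hindep.comp (fun _ => Real.sqrt) (fun _ => Real.continuous_sqrt.measurable)
  -- first and second moments of Y i
  have hEY : ∀ i, ∫ ω, Y i ω ∂μ = c := by
    intro i
    have h1 : ∫ ω, Y i ω ∂μ = ∫ x, Real.sqrt x ∂(Measure.map (Sum.elim h h' i) μ) :=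
      (integral_map (hmeasS i).aemeasurable Real.continuous_sqrt.measurable.aestronglyMeasurable).symm
    rw [h1, hmap i, hc]
    have h2 := (gamma_sqrt_pow_moment m hm 1).2
    simpa using h2
  have hIY : ∀ i, Integrable (Y i) μ := by
    intro i
    have h1 : Integrable (fun x => Real.sqrt x ^ 1) (Measure.map (Sum.elim h h' i) μ) := by
      rw [hmap i]; exact (gamma_sqrt_pow_moment m hm 1).1
    have h2 := (integrable_map_measure
      (Real.continuous_sqrt.measurable.pow_const 1).aestronglyMeasurable
      (hmeasS i).aemeasurable).mp h1
    simpa [Function.comp_def, hYdef] using h2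
  have hEY2 : ∀ i, ∫ ω, Y i ω ^ 2 ∂μ = 1 := by
    intro i
    have h1 : ∫ ω, Y i ω ^ 2 ∂μ
        = ∫ x, Real.sqrt x ^ 2 ∂(Measure.map (Sum.elim h h' i) μ) :=
      (integral_map (hmeasS i).aemeasurable
        (Real.continuous_sqrt.measurable.pow_const 2).aestronglyMeasurable).symm
    rw [h1, hmap i]
    have h2 := (gamma_sqrt_pow_moment m hm 2).2
    have h3 : ((2:ℕ) : ℝ) / 2 = 1 := by norm_num
    rw [h3] at h2
    rw [h2, Real.rpow_one, Real.Gamma_add_one hm.ne']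
    field_simp
  have hIY2 : ∀ i, Integrable (fun ω => Y i ω ^ 2) μ := by
    intro i
    have h1 : Integrable (fun x => Real.sqrt x ^ 2) (Measure.map (Sum.elim h h' i) μ) := by
      rw [hmap i]; exact (gamma_sqrt_pow_moment m hm 2).1
    have h2 := (integrable_map_measure
      (Real.continuous_sqrt.measurable.pow_const 2).aestronglyMeasurable
      (hmeasS i).aemeasurable).mp h1
    simpa [Function.comp_def, hYdef] using h2
  -- pair products
  have hprod_int : ∀ a b, a ≠ b → Integrable (Y a * Y b) μ := fun a b hab =>
    (hYindep.indepFun hab).integrable_mul (hIY a) (hIY b)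
  have hprod_eq : ∀ a b, a ≠ b → ∫ ω, (Y a * Y b) ω ∂μ = c * c := by
    intro a b hab
    have h1 := (hYindep.indepFun hab).integral_mul_eq_mul_integral (hIY a).aestronglyMeasurable (hIY b).aestronglyMeasurable
    rw [hEY a, hEY b] at h1
    exact h1
  -- the four-factor terms
  have hterm_ne : ∀ n k : Fin N, n ≠ k →
      ∫ ω, (Y (Sum.inl n) ω * Y (Sum.inr n) ω) * (Y (Sum.inl k) ω * Y (Sum.inr k) ω) ∂μ
        = c ^ 4 := by
    intro n k hnk
    have hAB : IndepFun (Y (Sum.inl n) * Y (Sum.inr n)) (Y (Sum.inl k) * Y (Sum.inr k)) μ :=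
      hYindep.indepFun_mul_mul hYmeas _ _ _ _ (by simp [hnk]) (by simp) (by simp)
        (by simp [hnk])
    have h1 := hAB.integral_mul_eq_mul_integral (hprod_int _ _ (by simp)).aestronglyMeasurable
      (hprod_int _ _ (by simp)).aestronglyMeasurable
    rw [hprod_eq _ _ (by simp), hprod_eq _ _ (by simp)] at h1
    rw [show c * c * (c * c) = c ^ 4 by ring] at h1
    exact h1
  have hterm_eq : ∀ n : Fin N,
      ∫ ω, (Y (Sum.inl n) ω * Y (Sum.inr n) ω) * (Y (Sum.inl n) ω * Y (Sum.inr n) ω) ∂μ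
        = 1 := by
    intro n
    have hAB : IndepFun (fun ω => Y (Sum.inl n) ω ^ 2) (fun ω => Y (Sum.inr n) ω ^ 2) μ :=
      (hYindep.indepFun (show (Sum.inl n : Fin N ⊕ Fin N) ≠ Sum.inr n by simp)).comp
        (measurable_id.pow_const 2) (measurable_id.pow_const 2)
    have h1 := hAB.integral_mul_eq_mul_integral (hIY2 _).aestronglyMeasurable (hIY2 _).aestronglyMeasurable
    rw [hEY2, hEY2, mul_one] at h1
    calc ∫ ω, (Y (Sum.inl n) ω * Y (Sum.inr n) ω) * (Y (Sum.inl n) ω * Y (Sum.inr n) ω) ∂μ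
        = ∫ ω, Y (Sum.inl n) ω ^ 2 * Y (Sum.inr n) ω ^ 2 ∂μ := by
          congr 1; funext ω; ring
      _ = 1 := h1
  have hint_term : ∀ n k : Fin N,
      Integrable (fun ω =>
        (Y (Sum.inl n) ω * Y (Sum.inr n) ω) * (Y (Sum.inl k) ω * Y (Sum.inr k) ω)) μ := by
    intro n k
    by_cases hnk : n = k
    · subst hnk
      have hAB : IndepFun (fun ω => Y (Sum.inl n) ω ^ 2) (fun ω => Y (Sum.inr n) ω ^ 2) μ :=
        (hYindep.indepFun (show (Sum.inl n : Fin N ⊕ Fin N) ≠ Sum.inr n by simp)).comp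
          (measurable_id.pow_const 2) (measurable_id.pow_const 2)
      exact (hAB.integrable_mul (hIY2 _) (hIY2 _)).congr
        (Filter.Eventually.of_forall fun ω => by simp [Pi.mul_apply]; ring)
    · have hAB : IndepFun (Y (Sum.inl n) * Y (Sum.inr n)) (Y (Sum.inl k) * Y (Sum.inr k)) μ :=
        hYindep.indepFun_mul_mul hYmeas _ _ _ _ (by simp [hnk]) (by simp) (by simp)
          (by simp [hnk])
      exact hAB.integrable_mul (hprod_int _ _ (by simp)) (hprod_int _ _ (by simp))
  -- expand the square
  have expand : ∀ ω : Ω, (∑ n, Real.sqrt (h n ω) * Real.sqrt (h' n ω)) ^ 2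
      = ∑ n, ∑ k, (Y (Sum.inl n) ω * Y (Sum.inr n) ω) * (Y (Sum.inl k) ω * Y (Sum.inr k) ω) := by
    intro ω
    rw [sq, Finset.sum_mul_sum]
    rfl
  rw [integral_congr_ae (Filter.Eventually.of_forall expand)]
  rw [integral_finset_sum _ (fun n _ => integrable_finset_sum _ (fun k _ => hint_term n k))]
  have step : ∀ n : Fin N,
      (∫ ω, ∑ k, (Y (Sum.inl n) ω * Y (Sum.inr n) ω) * (Y (Sum.inl k) ω * Y (Sum.inr k) ω) ∂μ)
        = ∑ k, if n = k then (1:ℝ) else c ^ 4 := by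
    intro n
    rw [integral_finset_sum _ (fun k _ => hint_term n k)]
    refine Finset.sum_congr rfl fun k _ => ?_
    by_cases hnk : n = k
    · subst hnk; simp [hterm_eq n]
    · simp [hnk, hterm_ne n k hnk]
  rw [Finset.sum_congr rfl (fun n _ => step n)]
  have hrow : ∀ n : Fin N, (∑ k, if n = k then (1:ℝ) else c ^ 4)
      = 1 + ((N:ℝ) - 1) * c ^ 4 := by
    intro n
    have hsplit : ∀ k : Fin N, (if n = k then (1:ℝ) else c ^ 4)
        = c ^ 4 + (if n = k then 1 - c ^ 4 else 0) := by
      intro k; by_cases hnk : n = k <;> simp [hnk]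
    rw [Finset.sum_congr rfl fun k _ => hsplit k, Finset.sum_add_distrib,
      Finset.sum_const, Finset.sum_ite_eq, Finset.card_univ]
    simp [nsmul_eq_mul, Fintype.card_fin]
    ring
  rw [Finset.sum_congr rfl (fun n _ => hrow n), Finset.sum_const, Finset.card_univ,
    Fintype.card_fin, nsmul_eq_mul]
  have hc4 : c ^ 4 = Real.Gamma (m + 1/2) ^ 4 / (m ^ 2 * Real.Gamma m ^ 4) := by
    rw [hc, div_pow, mul_pow]
    congr 2
    rw [← Real.rpow_natCast (m ^ ((1:ℝ)/2)) 4, ← Real.rpow_mul hm.le,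
      show ((1:ℝ)/2) * ((4:ℕ):ℝ) = ((2:ℕ):ℝ) by norm_num, Real.rpow_natCast]
  rw [hc4]
  ring
end

section
/- Let λ_o > 0, ℓ > 0, d ≥ 0, λ_i > 0, and set c = 2·λ_o·ℓ/π. For D ≥ ℓ define q(D) = (1/2)·[ (ℓ/c + 1/c²)·e^{−c(ℓ+d)} − (D/c + 1/c²)·e^{−c(D+d)} ] and P(D) = 1 − exp(−λ_i·q(D)). Then P is strictly increasing on [ℓ, ∞) and P(D) → 1 − exp(−(λ_i/2)·(ℓ/c + 1/c²)·e^{−c(ℓ+d)}) as D → ∞; in particular P is bounded above by this finite limit, which is strictly less than 1. -/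
open Real Filter

/-- Remark 1(iii): as a function of the IRS serving distance `D`, the reconfiguration
probability `P(D) = 1 − exp(−λ_i·q(D))` is strictly increasing on `[ℓ, ∞)`, tends to the
finite limit `1 − exp(−(λ_i/2)·(ℓ/c + 1/c²)·e^{−c(ℓ+d)})` as `D → ∞`, is bounded above by
this limit, and the limit is strictly less than `1`. -/
theorem reconfiguration_prob_strictMono_tendsto_limit
    (lo ℓ d li c : ℝ) (q P : ℝ → ℝ)
    (hlo : 0 < lo) (hℓ : 0 < ℓ) (hd : 0 ≤ d) (hli : 0 < li)
    (hc : c = 2 * lo * ℓ / π)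
    (hq : ∀ D : ℝ, q D = (1 / 2) * ((ℓ / c + 1 / c ^ 2) * Real.exp (-(c * (ℓ + d)))
      - (D / c + 1 / c ^ 2) * Real.exp (-(c * (D + d)))))
    (hP : ∀ D : ℝ, P D = 1 - Real.exp (-(li * q D))) :
    StrictMonoOn P (Set.Ici ℓ) ∧
    Tendsto P atTop
      (nhds (1 - Real.exp (-(li / 2 * ((ℓ / c + 1 / c ^ 2) * Real.exp (-(c * (ℓ + d)))))))) ∧
    (∀ D : ℝ, ℓ ≤ D →
      P D ≤ 1 - Real.exp (-(li / 2 * ((ℓ / c + 1 / c ^ 2) * Real.exp (-(c * (ℓ + d))))))) ∧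
    1 - Real.exp (-(li / 2 * ((ℓ / c + 1 / c ^ 2) * Real.exp (-(c * (ℓ + d)))))) < 1 := by
  have hc0 : 0 < c := by
    rw [hc]
    positivity
  have hcne : c ≠ 0 := ne_of_gt hc0
  set g : ℝ → ℝ := fun D => (D / c + 1 / c ^ 2) * Real.exp (-(c * (D + d))) with hg
  -- derivative of g
  have hderiv : ∀ x : ℝ, HasDerivAt g (-x * Real.exp (-(c * (x + d)))) x := by
    intro x
    have h1 : HasDerivAt (fun D : ℝ => D / c + 1 / c ^ 2) (1 / c) x := by
      have h := ((hasDerivAt_id x).div_const c).add_const (1 / c ^ 2)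
      exact h
    have hinner : HasDerivAt (fun D : ℝ => -(c * (D + d))) (-c) x := by
      have := (((hasDerivAt_id x).add_const d).const_mul c).neg
      have h' : HasDerivAt (-fun y => c * (y + d)) (-c) x := by simpa using this
      exact h'
    have h2 : HasDerivAt (fun D : ℝ => Real.exp (-(c * (D + d))))
        (Real.exp (-(c * (x + d))) * (-c)) x :=
      (Real.hasDerivAt_exp _).comp x hinner
    have : HasDerivAt (fun D : ℝ => (D / c + 1 / c ^ 2) * Real.exp (-(c * (D + d))))
        (1 / c * Real.exp (-(c * (x + d))) + (x / c + 1 / c ^ 2) * (Real.exp (-(c * (x + d))) * -c)) x :=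
      h1.mul h2
    convert this using 1
    field_simp
    ring
  -- g is strictly antitone on Ici ℓ
  have hanti : StrictAntiOn g (Set.Ici ℓ) := by
    apply strictAntiOn_of_deriv_neg (convex_Ici ℓ)
    · exact fun x _ => (hderiv x).continuousAt.continuousWithinAt
    · intro x hx
      rw [interior_Ici] at hx
      have hx0 : 0 < x := lt_trans hℓ hx
      rw [(hderiv x).deriv]
      have := Real.exp_pos (-(c * (x + d)))
      nlinarith
  -- q strictly mono on Ici ℓ
  have hqmono : StrictMonoOn q (Set.Ici ℓ) := by
    intro x hx y hy hxy
    rw [hq x, hq y]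
    have := hanti hx hy hxy
    simp only [hg] at this
    nlinarith
  have hPmono : StrictMonoOn P (Set.Ici ℓ) := by
    intro x hx y hy hxy
    rw [hP x, hP y]
    have : q x < q y := hqmono hx hy hxy
    have : Real.exp (-(li * q y)) < Real.exp (-(li * q x)) := by
      apply Real.exp_lt_exp.2
      nlinarith
    linarith
  refine ⟨hPmono, ?_, ?_, ?_⟩
  · -- tendsto
    have hxexp : Tendsto (fun x : ℝ => x * Real.exp (-x)) atTop (nhds 0) := by
      simpa using Real.tendsto_pow_mul_exp_neg_atTop_nhds_zero 1
    have hcomp : Tendsto (fun D : ℝ => c * D) atTop atTop :=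
      Tendsto.const_mul_atTop hc0 tendsto_id
    have h1 : Tendsto (fun D : ℝ => (c * D) * Real.exp (-(c * D))) atTop (nhds 0) := by
      have := hxexp.comp hcomp
      simpa [Function.comp_def] using this
    have h2 : Tendsto (fun D : ℝ => Real.exp (-(c * D))) atTop (nhds 0) := by
      have : Tendsto (fun D : ℝ => -(c * D)) atTop atBot := by
        exact tendsto_neg_atTop_atBot.comp hcomp
      exact Real.tendsto_exp_atBot.comp this
    have hg0 : Tendsto g atTop (nhds 0) := by
      have h3 : Tendsto (fun D : ℝ => ((c * D) * Real.exp (-(c * D)) + Real.exp (-(c * D)))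
          * (Real.exp (-(c * d)) / c ^ 2)) atTop (nhds 0) := by
        have := (h1.add h2).mul_const (Real.exp (-(c * d)) / c ^ 2)
        simpa using this
      refine h3.congr (fun D => ?_)
      simp only [hg]
      rw [show -(c * (D + d)) = -(c * D) + -(c * d) by ring, Real.exp_add]
      field_simp
    have hq0 : Tendsto q atTop
        (nhds ((1 / 2) * ((ℓ / c + 1 / c ^ 2) * Real.exp (-(c * (ℓ + d)))))) := by
      have := ((tendsto_const_nhds.sub hg0).const_mul (1 / 2) :
        Tendsto (fun D => (1/2) * (((ℓ / c + 1 / c ^ 2) * Real.exp (-(c * (ℓ + d)))) - g D))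
          atTop (nhds ((1/2) * (((ℓ / c + 1 / c ^ 2) * Real.exp (-(c * (ℓ + d)))) - 0))))
      simp only [sub_zero] at this
      exact this.congr (fun D => by rw [hq D])
    have harr : li / 2 * ((ℓ / c + 1 / c ^ 2) * Real.exp (-(c * (ℓ + d))))
        = li * (1 / 2 * ((ℓ / c + 1 / c ^ 2) * Real.exp (-(c * (ℓ + d))))) := by ring
    rw [harr]
    have hexp : Tendsto (fun D => Real.exp (-(li * q D))) atTop
        (nhds (Real.exp (-(li * (1 / 2 * ((ℓ / c + 1 / c ^ 2) * Real.exp (-(c * (ℓ + d))))))))) := by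
      have := (Real.continuous_exp.tendsto _).comp ((hq0.const_mul li).neg)
      simpa [Function.comp_def] using this
    exact Tendsto.congr (fun D => (hP D).symm) (tendsto_const_nhds.sub hexp)
  · -- bound
    intro D hD
    rw [hP D]
    have hDpos : 0 < D := lt_of_lt_of_le hℓ hD
    have hgD : 0 ≤ g D := by
      have : 0 ≤ D / c + 1 / c ^ 2 := by positivity
      exact mul_nonneg this (Real.exp_pos _).le
    have hqle : q D ≤ (1 / 2) * ((ℓ / c + 1 / c ^ 2) * Real.exp (-(c * (ℓ + d)))) := by
      rw [hq D]
      simp only [hg] at hgD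
      nlinarith
    have : Real.exp (-(li / 2 * ((ℓ / c + 1 / c ^ 2) * Real.exp (-(c * (ℓ + d))))))
        ≤ Real.exp (-(li * q D)) := by
      apply Real.exp_le_exp.2
      nlinarith
    linarith
  · have := Real.exp_pos (-(li / 2 * ((ℓ / c + 1 / c ^ 2) * Real.exp (-(c * (ℓ + d))))))
    linarith
end
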